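/- Let H be a second countable topological group acting continuously on a topological space X, let V be an open neighborhood of the identity of H, and let Y ⊆ X be a set such that for every y ∈ Y and every v ∈ V, if v • y ∈ Y then v • y = y. Then for every x ∈ X, the intersection of Y with the orbit {h • x : h ∈ H} is countable. -/

import Mathlib

/-- A lacunary section is a countable section, in the transformation-group case: if `Y`
is `V`-lacunary for an open neighborhood `V` of the identity of a second countable
topological group `H` acting continuously on `X`, then `Y` meets every orbit in a
countable set. -/
theorem stmt_1 {H X : Type*} [TopologicalSpace H] [Group H] [IsTopologicalGroup H]
    [SecondCountableTopology H]
    [TopologicalSpace X] [MulAction H X] [ContinuousSMul H X]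
    (V : Set H) (hVopen : IsOpen V) (hV1 : (1 : H) ∈ V)
    (Y : Set X) (hY : ∀ y ∈ Y, ∀ v ∈ V, v • y ∈ Y → v • y = y) :
    ∀ x : X, (Y ∩ {z : X | ∃ h : H, h • x = z}).Countable := by
  intro x
  obtain ⟨W, hW, hWsplit⟩ := exists_nhds_split_inv (hVopen.mem_nhds hV1)
  obtain ⟨D, hDcount, hDdense⟩ := TopologicalSpace.exists_countable_dense H
  set S := Y ∩ {z : X | ∃ h : H, h • x = z} with hS
  have h1W : (1 : H) ∈ interior W := mem_interior_iff_mem_nhds.mpr hW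
  have key : ∀ z : S, ∃ d : H, d ∈ D ∧ ∃ h : H, h • x = (z : X) ∧ h / d ∈ W := by
    rintro ⟨z, hzY, h, hhx⟩
    -- the set {d | h / d ∈ interior W} is open and nonempty, so it meets D
    have hopen : IsOpen {d : H | h / d ∈ interior W} :=
      isOpen_interior.preimage (continuous_const.div' continuous_id)
    have hne : ({d : H | h / d ∈ interior W}).Nonempty := ⟨h, by simp [h1W]⟩
    obtain ⟨d, hd1, hd2⟩ := hDdense.exists_mem_open hopen hne
    exact ⟨d, hd1, h, hhx, interior_subset hd2⟩
  choose d hdD hfun hx hW' using key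
  have : Countable D := hDcount.to_subtype
  have hinj : Function.Injective fun z : S => (⟨d z, hdD z⟩ : D) := by
    intro z₁ z₂ hz
    have hdd : d z₁ = d z₂ := congrArg Subtype.val hz
    have hv : (hfun z₁) / (d z₁) / ((hfun z₂) / (d z₂)) ∈ V :=
      hWsplit _ (hW' z₁) _ (hW' z₂)
    rw [hdd] at hv
    have hv' : (hfun z₁) * (hfun z₂)⁻¹ ∈ V := by
      have : (hfun z₁) / (d z₂) / ((hfun z₂) / (d z₂)) = (hfun z₁) * (hfun z₂)⁻¹ := by
        simp [div_eq_mul_inv, mul_assoc]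
      rwa [this] at hv
    set v := (hfun z₁) * (hfun z₂)⁻¹
    have hsmul : v • (z₂ : X) = (z₁ : X) := by
      rw [← hx z₂, ← hx z₁, smul_smul]
      congr 1
      exact inv_mul_cancel_right _ _
    have hz₂Y : (z₂ : X) ∈ Y := z₂.2.1
    have hz₁Y : v • (z₂ : X) ∈ Y := by rw [hsmul]; exact z₁.2.1
    have := hY _ hz₂Y v hv' hz₁Y
    rw [hsmul] at this
    exact Subtype.ext this
  exact Set.countable_coe_iff.mp hinj.countable
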